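/- In F_p, Σ_{r=1}^{p-1} 3r·(p+t)! / (2·(r+t+1)·t!) = 2, where t is the integer inverse of 3 as above and the summand is interpreted as follows: for r + t + 1 ≢ 0 (mod p) the term vanishes in F_p because p divides (p+t)!/t! · 1/(r+t+1) appropriately; the whole sum equals 3(p-t-1)(p+t)!/(2p·t!), which reduces to 2 in F_p. (This is the computation α(p) = 2.) -/

import Mathlib

/-- `α(p) = ∑_{r=1}^{p-1} 3r·(3p+1)!!!/(2(3r+4)) ≡ 2 (mod p)`, where
`(3p+1)!!! = ∏_{k=0}^{p} (3k+1)` and `(3p+1)!!!/(3r+4)` is the integer obtained by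
removing the factor `3r+4 = 3(r+1)+1` from this product. -/
theorem stmt8 {p : ℕ} [Fact p.Prime] (hp3 : 3 < p) (t : ℕ)
    (ht : 3 * t = if p % 3 = 1 then 2 * p + 1 else p + 1) :
    ∑ r ∈ Finset.Icc 1 (p - 1),
      ((3 * r : ℕ) : ZMod p)
        * (∏ k ∈ (Finset.range (p + 1)).erase (r + 1), ((3 * k + 1 : ℕ) : ZMod p)) / (2 : ZMod p)
      = 2 := by
  have hp : p.Prime := Fact.out
  have hp4 : p ≠ 4 := by rintro rfl; norm_num at hp
  have hp6 : p ≠ 6 := by rintro rfl; norm_num at hp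
  have hbt : 2 ≤ t ∧ t + 2 ≤ p := by split_ifs at ht with h <;> omega
  have h3t : (3 : ZMod p) * (t : ZMod p) = 1 := by
    have h0 : ((3 * t : ℕ) : ZMod p)
        = ((if p % 3 = 1 then 2 * p + 1 else p + 1 : ℕ) : ZMod p) := by rw [ht]
    have hpz : ((p : ℕ) : ZMod p) = 0 := ZMod.natCast_self p
    split_ifs at h0 with h <;> push_cast [hpz] at h0 <;> linear_combination h0
  have hpz : ((p : ℕ) : ZMod p) = 0 := ZMod.natCast_self p
  have h2 : (2 : ZMod p) ≠ 0 := by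
    have : ¬ ((p : ℕ) ∣ 2) := fun hd => by
      have := Nat.le_of_dvd (by norm_num) hd; omega
    simpa [ZMod.natCast_eq_zero_iff] using
      (fun h => this ((ZMod.natCast_eq_zero_iff 2 p).mp (by exact_mod_cast h)))
  -- the zero factor location
  have hzero : ((3 * (p - t) + 1 : ℕ) : ZMod p) = 0 := by
    push_cast [Nat.cast_sub (by omega : t ≤ p), hpz]
    linear_combination -h3t
  -- casts determine naturals below p
  have hval : ∀ a b : ℕ, a < p → b < p → ((a : ℕ) : ZMod p) = b → a = b := by
    intro a b ha hb hab
    have := ZMod.val_cast_of_lt ha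
    have := ZMod.val_cast_of_lt hb
    rw [← ZMod.val_cast_of_lt ha, ← ZMod.val_cast_of_lt hb, hab]
  -- multiplication by 3 is injective in ZMod p
  have hmul3 : ∀ x y : ZMod p, 3 * x = 3 * y → x = y := by
    intro x y hxy
    calc x = (t : ZMod p) * (3 * x) := by rw [← mul_assoc, mul_comm (t : ZMod p) 3, h3t, one_mul]
    _ = (t : ZMod p) * (3 * y) := by rw [hxy]
    _ = y := by rw [← mul_assoc, mul_comm (t : ZMod p) 3, h3t, one_mul]
  have key : ∑ r ∈ Finset.Icc 1 (p - 1),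
      ((3 * r : ℕ) : ZMod p)
        * (∏ k ∈ (Finset.range (p + 1)).erase (r + 1), ((3 * k + 1 : ℕ) : ZMod p)) / (2 : ZMod p)
      = ((3 * (p - t - 1) : ℕ) : ZMod p)
        * (∏ k ∈ (Finset.range (p + 1)).erase ((p - t - 1) + 1), ((3 * k + 1 : ℕ) : ZMod p))
        / (2 : ZMod p) := by
    apply Finset.sum_eq_single_of_mem
    · simp only [Finset.mem_Icc]; omega
    · intro r hr hne
      rw [Finset.mem_Icc] at hr
      have hmem : p - t ∈ (Finset.range (p + 1)).erase (r + 1) := by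
        simp only [Finset.mem_erase, Finset.mem_range]; omega
      rw [Finset.prod_eq_zero hmem hzero]
      simp
  rw [key]
  have heq : (p - t - 1) + 1 = p - t := by omega
  rw [heq]
  -- compute the product: it is -1
  have hprod : ∏ k ∈ (Finset.range (p + 1)).erase (p - t), ((3 * k + 1 : ℕ) : ZMod p) = -1 := by
    have hsplit : (Finset.range (p + 1)).erase (p - t)
        = insert p ((Finset.range p).erase (p - t)) := by
      rw [Finset.range_add_one, Finset.erase_insert_of_ne (by omega)]
    rw [hsplit, Finset.prod_insert (by simp)]
    have hfac : ((3 * p + 1 : ℕ) : ZMod p) = 1 := by push_cast [hpz]; ring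
    rw [hfac, one_mul]
    -- now the Wilson argument
    set S := (Finset.range p).erase (p - t) with hS
    have hne0 : ∀ k ∈ S, ((3 * k + 1 : ℕ) : ZMod p) ≠ 0 := by
      intro k hk hk0
      simp only [hS, Finset.mem_erase, Finset.mem_range] at hk
      apply hk.1
      apply hval k (p - t) hk.2 (by omega)
      have : (3 : ZMod p) * k = 3 * ((p : ℕ) - (t : ℕ) : ZMod p) := by
        push_cast at hk0 ⊢
        linear_combination hk0 + h3t - 3 * hpz
      have := hmul3 _ _ this
      rw [this]
      push_cast [Nat.cast_sub (by omega : t ≤ p)]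
      ring
    have hinj : Set.InjOn (fun k => (3 * k + 1) % p) S := by
      intro a ha b hb hab
      simp only [hS, Finset.coe_erase, Set.mem_diff, Finset.mem_coe, Finset.mem_range] at ha hb
      simp only at hab
      have hc : ((3 * a + 1 : ℕ) : ZMod p) = ((3 * b + 1 : ℕ) : ZMod p) := by
        rw [← ZMod.natCast_mod, hab, ZMod.natCast_mod]
      push_cast at hc
      have : (3 : ZMod p) * a = 3 * b := by linear_combination hc
      exact hval a b ha.1 hb.1 (hmul3 _ _ this)
    have himg : Finset.image (fun k => (3 * k + 1) % p) S = Finset.Icc 1 (p - 1) := by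
      apply Finset.eq_of_subset_of_card_le
      · intro j hj
        simp only [Finset.mem_image] at hj
        obtain ⟨k, hk, rfl⟩ := hj
        have hlt : (3 * k + 1) % p < p := Nat.mod_lt _ (by omega)
        have hne : (3 * k + 1) % p ≠ 0 := by
          intro h0
          apply hne0 k hk
          rw [← ZMod.natCast_mod, h0, Nat.cast_zero]
        simp only [Finset.mem_Icc]; omega
      · rw [Finset.card_image_of_injOn hinj, hS, Finset.card_erase_of_mem (by
          simp only [Finset.mem_range]; omega), Finset.card_range, Nat.card_Icc]
        omega
    calc ∏ k ∈ S, ((3 * k + 1 : ℕ) : ZMod p)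
        = ∏ k ∈ S, (((3 * k + 1) % p : ℕ) : ZMod p) := by
          apply Finset.prod_congr rfl; intro k _; rw [ZMod.natCast_mod]
      _ = ∏ j ∈ Finset.image (fun k => (3 * k + 1) % p) S, ((j : ℕ) : ZMod p) := by
          rw [Finset.prod_image (fun a ha b hb => hinj ha hb)]
      _ = ∏ j ∈ Finset.Icc 1 (p - 1), ((j : ℕ) : ZMod p) := by rw [himg]
      _ = -1 := by
          rw [← Nat.cast_prod]
          have hfe : ∏ j ∈ Finset.Icc 1 (p - 1), j = Nat.factorial (p - 1) := by
            have h1 := Finset.prod_Ico_id_eq_factorial (p - 1)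
            rw [← Finset.Ico_add_one_right_eq_Icc]
            rw [(by omega : p - 1 + 1 = p)] at h1
            rwa [(by omega : p - 1 + 1 = p)]
          rw [hfe]
          exact ZMod.wilsons_lemma p
  rw [hprod]
  have hr0 : ((3 * (p - t - 1) : ℕ) : ZMod p) = -4 := by
    have : (3 * (p - t - 1) : ℕ) = 3 * p - (3 * t + 3) := by omega
    rw [this, Nat.cast_sub (by omega : 3 * t + 3 ≤ 3 * p)]
    push_cast [hpz]
    linear_combination -h3t
  rw [hr0, div_eq_iff h2]
  ring
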